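/- For every Young diagram λ with n cells, Σ_Λ dim Λ = (n+1)·dim λ, where the sum is over all Young diagrams Λ with n+1 cells that contain λ. Consequently, the Plancherel transition probabilities p(λ,Λ) = dim Λ/((n+1)·dim λ) are nonnegative and sum to 1 over all such Λ. -/

import Mathlib

open scoped BigOperators

/-- The Kostka number `K_{μ,w}`: the number of semistandard Young tableaux of shape `μ` and
weight `w`, i.e. having exactly `w i` entries equal to `i` for each `i`. -/
noncomputable def kostka (μ : YoungDiagram) (w : ℕ → ℕ) : ℕ :=
  Nat.card {T : SemistandardYoungTableau μ //
    ∀ i : ℕ, (μ.cells.filter fun c => T c.1 c.2 = i).card = w i}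

/-- The number of saturated chains `μ = t₀ ⊂ t₁ ⊂ ⋯ ⊂ t_m = ν` of Young diagrams in which each
`t_{i+1}` is obtained from `t_i` by adding one cell (the number of standard skew tableaux of
shape `ν/μ`). -/
noncomputable def chainCount (μ ν : YoungDiagram) (m : ℕ) : ℕ :=
  Nat.card {t : Fin (m + 1) → YoungDiagram //
    t 0 = μ ∧ t (Fin.last m) = ν ∧
    ∀ i : Fin m, t i.castSucc ≤ t i.succ ∧ (t i.succ).card = (t i.castSucc).card + 1}

/-- `dimSYT μ` is the number of standard Young tableaux of shape `μ`: the number of saturated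
chains from the empty diagram to `μ` adding one cell at a time. -/
noncomputable def dimSYT (μ : YoungDiagram) : ℕ :=
  chainCount ⊥ μ μ.card

/-- The two-row Young diagram `(a, b)` (for `b ≤ a`). -/
def twoRow (a b : ℕ) : YoungDiagram :=
  YoungDiagram.ofRowLens [a, min a b] (by simp [List.sortedGE_iff_pairwise])

/-- The dominance order on Young diagrams: `dominates μ ν` means `μ ⊵ ν`, i.e. every partial
sum of row lengths of `μ` is at least the corresponding partial sum for `ν`. -/
def dominates (μ ν : YoungDiagram) : Prop :=
  ∀ m : ℕ, ∑ i ∈ Finset.range m, ν.rowLen i ≤ ∑ i ∈ Finset.range m, μ.rowLen i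

section SDCAux

open YoungDiagram Finset

namespace SDC

noncomputable instance : DecidableEq YoungDiagram := Classical.decEq _

lemma natCard_sigma {ι : Type*} [Fintype ι] (f : ι → Type*) [∀ i, Finite (f i)] :
    Nat.card (Σ i, f i) = ∑ i, Nat.card (f i) := by
  have : ∀ i, Fintype (f i) := fun i => Fintype.ofFinite _
  classical
  simp [Nat.card_eq_fintype_card, @Fintype.card_sigma _ _ _ this]

def Cov (Λ μ : YoungDiagram) : Prop := μ ≤ Λ ∧ Λ.card = μ.card + 1

lemma card_bot : (⊥ : YoungDiagram).card = 0 := by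
  simp [YoungDiagram.card, YoungDiagram.cells_bot]

lemma eq_bot_of_card_eq_zero {μ : YoungDiagram} (h : μ.card = 0) : μ = ⊥ := by
  ext c
  simp only [YoungDiagram.card] at h
  simp [Finset.card_eq_zero.mp h, YoungDiagram.cells_bot]

lemma card_lt_card_of_lt {μ ν : YoungDiagram} (h : μ < ν) : μ.card < ν.card :=
  Finset.card_lt_card (YoungDiagram.cells_ssubset_iff.mpr h)

lemma eq_of_le_of_card_le {μ ν : YoungDiagram} (h : μ ≤ ν) (hc : ν.card ≤ μ.card) : μ = ν := by
  ext1
  exact (Finset.eq_of_subset_of_card_le (YoungDiagram.cells_subset_iff.mpr h) hc)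

/-- diagrams with a given card form a finite set -/
lemma finite_card (n : ℕ) : {μ : YoungDiagram | μ.card = n}.Finite := by
  rw [Set.finite_coe_iff.symm]
  refine Finite.of_injective
    (fun x => (⟨x.1.cells, ?_⟩ : ((Finset.range n ×ˢ Finset.range n).powerset : Finset _))) ?_
  · rw [Finset.mem_powerset]
    intro c hc
    rw [YoungDiagram.mem_cells] at hc
    have hc0 : (c.1, 0) ∈ x.1 := x.1.up_left_mem le_rfl (Nat.zero_le _) (by simpa using hc)
    have h1 : c.1 < x.1.colLen 0 := YoungDiagram.mem_iff_lt_colLen.mp hc0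
    have h2 : c.2 < x.1.rowLen c.1 := YoungDiagram.mem_iff_lt_rowLen.mp (by simpa using hc)
    have hcol : x.1.colLen 0 ≤ x.1.card := by
      rw [YoungDiagram.colLen_eq_card]
      exact Finset.card_le_card (Finset.filter_subset _ _)
    have hrow : x.1.rowLen c.1 ≤ x.1.card := by
      rw [YoungDiagram.rowLen_eq_card]
      exact Finset.card_le_card (Finset.filter_subset _ _)
    have := x.2
    simp only [Set.mem_setOf_eq] at this
    simp only [Finset.mem_product, Finset.mem_range, Prod.mk.eta]
    constructor
    · omega
    · omega
  · intro a b hab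
    ext1; ext1
    exact congrArg Subtype.val hab

lemma finite_le (ν : YoungDiagram) : Finite {x : YoungDiagram // x ≤ ν} := by
  refine Finite.of_injective
    (fun x => (⟨x.1.cells, Finset.mem_powerset.mpr (YoungDiagram.cells_subset_iff.mpr x.2)⟩ :
      (ν.cells.powerset : Finset _))) ?_
  intro a b hab
  ext1; ext1
  exact congrArg Subtype.val hab

lemma finite_covers (μ : YoungDiagram) : {Λ : YoungDiagram | Cov Λ μ}.Finite :=
  (finite_card (μ.card + 1)).subset (fun Λ h => h.2)

lemma finite_covered (Λ : YoungDiagram) : {μ : YoungDiagram | Cov Λ μ}.Finite := by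
  have := finite_le Λ
  have : {x : YoungDiagram | x ≤ Λ}.Finite := Set.finite_coe_iff.mp this
  exact this.subset (fun μ h => h.1)

/-- The finset of covers of `μ`. -/
noncomputable def coversF (μ : YoungDiagram) : Finset YoungDiagram := (finite_covers μ).toFinset

/-- The finset of diagrams covered by `Λ`. -/
noncomputable def coveredF (Λ : YoungDiagram) : Finset YoungDiagram := (finite_covered Λ).toFinset

@[simp] lemma mem_coversF {μ Λ : YoungDiagram} : Λ ∈ coversF μ ↔ Cov Λ μ := by
  simp [coversF]

@[simp] lemma mem_coveredF {μ Λ : YoungDiagram} : μ ∈ coveredF Λ ↔ Cov Λ μ := by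
  simp [coveredF]

abbrev ChainT (μ ν : YoungDiagram) (m : ℕ) :=
  {t : Fin (m + 1) → YoungDiagram //
    t 0 = μ ∧ t (Fin.last m) = ν ∧
    ∀ i : Fin m, t i.castSucc ≤ t i.succ ∧ (t i.succ).card = (t i.castSucc).card + 1}

lemma chainCount_eq (μ ν : YoungDiagram) (m : ℕ) : chainCount μ ν m = Nat.card (ChainT μ ν m) := rfl

lemma chain_mono {μ ν : YoungDiagram} {m : ℕ} (t : ChainT μ ν m) :
    ∀ j i : Fin (m + 1), i ≤ j → t.1 i ≤ t.1 j := by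
  intro j
  induction j using Fin.induction with
  | zero => intro i hi; rw [Fin.le_zero_iff.mp hi]
  | succ j ih =>
    intro i hi
    rcases eq_or_lt_of_le hi with h | h
    · rw [h]
    · have : i ≤ j.castSucc := Fin.le_castSucc_iff.mpr h
      exact le_trans (ih i this) (t.2.2.2 j).1

lemma chain_le_last {μ ν : YoungDiagram} {m : ℕ} (t : ChainT μ ν m) (i : Fin (m + 1)) :
    t.1 i ≤ ν := by
  have := chain_mono t (Fin.last m) i (Fin.le_last i)
  rwa [t.2.2.1] at this

instance chain_finite (μ ν : YoungDiagram) (m : ℕ) : Finite (ChainT μ ν m) := by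
  have := finite_le ν
  refine Finite.of_injective
    (fun t => (fun i => (⟨t.1 i, chain_le_last t i⟩ : {x : YoungDiagram // x ≤ ν}))) ?_
  intro a b hab
  ext i : 2
  exact congrArg Subtype.val (congrFun hab i)

lemma dimSYT_bot : dimSYT ⊥ = 1 := by
  have : dimSYT ⊥ = Nat.card (ChainT ⊥ ⊥ 0) := by
    have h0 : (⊥ : YoungDiagram).card = 0 := by
      simp [YoungDiagram.card, YoungDiagram.cells_bot]
    rw [dimSYT, h0, chainCount]
  rw [this]
  have : Unique (ChainT ⊥ ⊥ 0) := by
    refine ⟨⟨⟨fun _ => ⊥, rfl, rfl, fun i => i.elim0⟩⟩, ?_⟩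
    rintro ⟨t, h0, hl, hc⟩
    ext i : 2
    have hi : i = 0 := Fin.fin_one_eq_zero i
    subst hi
    exact h0
  rw [Nat.card_unique]

/-- Truncating a chain to `Λ` at the penultimate step. -/
noncomputable def pen {Λ : YoungDiagram} {m : ℕ} (t : ChainT ⊥ Λ (m + 1)) : YoungDiagram :=
  t.1 (Fin.last m).castSucc

lemma pen_mem {Λ : YoungDiagram} {m : ℕ} (t : ChainT ⊥ Λ (m + 1)) : pen t ∈ coveredF Λ := by
  rw [mem_coveredF]
  have h := t.2.2.2 (Fin.last m)
  rw [Fin.succ_last, t.2.2.1] at h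
  exact ⟨h.1, h.2⟩

/-- Fibers of `pen` are chains to the penultimate diagram. -/
noncomputable def fiberEquiv (Λ ν : YoungDiagram) (hν : Cov Λ ν) (m : ℕ) :
    {t : ChainT ⊥ Λ (m + 1) // pen t = ν} ≃ ChainT ⊥ ν m where
  toFun t := ⟨fun i => t.1.1 i.castSucc, by
    refine ⟨?_, ?_, ?_⟩
    · show t.1.1 (Fin.castSucc 0) = ⊥
      rw [Fin.castSucc_zero]; exact t.1.2.1
    · exact t.2
    · intro i
      have h := t.1.2.2.2 i.castSucc
      rwa [Fin.succ_castSucc] at h⟩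
  invFun s := ⟨⟨Fin.snoc s.1 Λ, by
      refine ⟨?_, ?_, ?_⟩
      · rw [show (0 : Fin (m + 1 + 1)) = Fin.castSucc 0 by rfl, Fin.snoc_castSucc]
        exact s.2.1
      · exact Fin.snoc_last _ _
      · intro i
        induction i using Fin.lastCases with
        | last =>
          rw [Fin.succ_last, Fin.snoc_last, Fin.snoc_castSucc, s.2.2.1]
          exact ⟨hν.1, hν.2⟩
        | cast j =>
          rw [Fin.succ_castSucc, Fin.snoc_castSucc, Fin.snoc_castSucc]
          exact s.2.2.2 j⟩,
    by
      simp only [pen]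
      rw [Fin.snoc_castSucc]; exact s.2.2.1⟩
  left_inv t := by
    ext i : 4
    simp only
    induction i using Fin.lastCases with
    | last => rw [Fin.snoc_last, t.1.2.2.1]
    | cast j => rw [Fin.snoc_castSucc]
  right_inv s := by
    ext i : 2
    simp only
    exact Fin.snoc_castSucc _ _ _

lemma chainCount_succ (Λ : YoungDiagram) (m : ℕ) :
    chainCount ⊥ Λ (m + 1) = ∑ ν ∈ coveredF Λ, chainCount ⊥ ν m := by
  classical
  letI : Fintype (ChainT ⊥ Λ (m + 1)) := Fintype.ofFinite _
  rw [chainCount_eq, Nat.card_eq_fintype_card, ← Finset.card_univ,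
    Finset.card_eq_sum_card_fiberwise (fun t _ => pen_mem t)]
  refine Finset.sum_congr rfl ?_
  intro ν hν
  rw [← Fintype.card_subtype, chainCount_eq,
    ← Nat.card_eq_fintype_card, Nat.card_congr (fiberEquiv Λ ν (mem_coveredF.mp hν) m)]

lemma card_pos_of_ne_bot {Λ : YoungDiagram} (h : Λ ≠ ⊥) : 0 < Λ.card := by
  rcases Nat.eq_zero_or_pos Λ.card with h0 | h0
  · exfalso; apply h
    ext c
    simp only [YoungDiagram.card] at h0
    simp [Finset.card_eq_zero.mp h0, YoungDiagram.cells_bot]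
  · exact h0

lemma dimSYT_rec {Λ : YoungDiagram} (h : Λ ≠ ⊥) :
    dimSYT Λ = ∑ ν ∈ coveredF Λ, dimSYT ν := by
  obtain ⟨m, hm⟩ : ∃ m, Λ.card = m + 1 := ⟨Λ.card - 1, by have := card_pos_of_ne_bot h; omega⟩
  rw [dimSYT, hm, chainCount_succ]
  refine Finset.sum_congr rfl ?_
  intro ν hν
  have hc := (mem_coveredF.mp hν).2
  rw [dimSYT]
  congr 1
  omega

/-- A cell can be added at the end of row `i`. -/
def AddValid (μ : YoungDiagram) (i : ℕ) : Prop := i = 0 ∨ μ.rowLen i < μ.rowLen (i - 1)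

/-- The last cell of row `i` can be removed. -/
def RemValid (μ : YoungDiagram) (i : ℕ) : Prop := μ.rowLen (i + 1) < μ.rowLen i

/-- Add a cell at the end of row `i`. -/
def addCell (μ : YoungDiagram) (i : ℕ) (h : AddValid μ i) : YoungDiagram where
  cells := insert (i, μ.rowLen i) μ.cells
  isLowerSet := by
    intro a b hba ha
    simp only [Finset.coe_insert, Set.mem_insert_iff, Finset.mem_coe, YoungDiagram.mem_cells] at *
    rcases ha with ha | ha
    · subst ha
      obtain ⟨h1, h2⟩ := hba
      rcases Nat.lt_or_ge b.2 (μ.rowLen i) with hb2 | hb2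
      · right
        rw [show b = (b.1, b.2) by rfl]
        rw [YoungDiagram.mem_iff_lt_rowLen]
        calc b.2 < μ.rowLen i := hb2
          _ ≤ μ.rowLen b.1 := μ.rowLen_anti _ _ h1
      · -- b.2 = rowLen i
        have hb2' : b.2 = μ.rowLen i := le_antisymm (by simpa using h2) hb2
        rcases Nat.lt_or_ge b.1 i with hb1 | hb1
        · right
          rcases h with h0 | h
          · omega
          · rw [show b = (b.1, b.2) by rfl, YoungDiagram.mem_iff_lt_rowLen]
            calc b.2 = μ.rowLen i := hb2'
              _ < μ.rowLen (i - 1) := h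
              _ ≤ μ.rowLen b.1 := μ.rowLen_anti _ _ (by omega)
        · left
          have : b.1 = i := le_antisymm (by simpa using h1) hb1
          rw [Prod.ext_iff]
          exact ⟨this, hb2'⟩
    · exact Or.inr (μ.isLowerSet hba ha)

lemma mem_addCell {μ : YoungDiagram} {i : ℕ} {h : AddValid μ i} {c : ℕ × ℕ} :
    c ∈ addCell μ i h ↔ c = (i, μ.rowLen i) ∨ c ∈ μ := by
  rw [← YoungDiagram.mem_cells]
  simp [addCell]

lemma corner_not_mem {μ : YoungDiagram} {i : ℕ} : (i, μ.rowLen i) ∉ μ := by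
  rw [YoungDiagram.mem_iff_lt_rowLen]; omega

lemma addCell_covers {μ : YoungDiagram} {i : ℕ} (h : AddValid μ i) : Cov (addCell μ i h) μ := by
  constructor
  · rw [← YoungDiagram.cells_subset_iff]
    exact Finset.subset_insert _ _
  · show (insert (i, μ.rowLen i) μ.cells).card = μ.cells.card + 1
    rw [Finset.card_insert_of_notMem]
    rw [YoungDiagram.mem_cells]
    exact corner_not_mem

/-- Remove the last cell of row `i`. -/
def removeCell (μ : YoungDiagram) (i : ℕ) (h : RemValid μ i) : YoungDiagram where
  cells := μ.cells.erase (i, μ.rowLen i - 1)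
  isLowerSet := by
    intro a b hba hb
    simp only [Finset.coe_erase, Set.mem_diff, Finset.mem_coe, YoungDiagram.mem_cells,
      Set.mem_singleton_iff] at *
    obtain ⟨ha, hane⟩ := hb
    refine ⟨μ.isLowerSet hba ha, ?_⟩
    intro hbc
    subst hbc
    obtain ⟨h1, h2⟩ := hba
    simp only at h1 h2
    have hri : 0 < μ.rowLen i := by
      unfold RemValid at h; omega
    -- a = (a.1, a.2), a.1 ≥ i, a.2 ≥ rowLen i - 1
    have ha2 : a.2 < μ.rowLen a.1 := YoungDiagram.mem_iff_lt_rowLen.mp (by simpa using ha)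
    rcases Nat.lt_or_ge i a.1 with hia | hia
    · have : μ.rowLen a.1 ≤ μ.rowLen (i + 1) := μ.rowLen_anti _ _ (by omega)
      unfold RemValid at h
      omega
    · have hai : a.1 = i := by omega
      subst hai
      have : a.2 = μ.rowLen a.1 - 1 := by omega
      apply hane
      rw [show a = (a.1, a.2) by rfl, this]
  
lemma mem_removeCell {μ : YoungDiagram} {i : ℕ} {h : RemValid μ i} {c : ℕ × ℕ} :
    c ∈ removeCell μ i h ↔ c ∈ μ ∧ c ≠ (i, μ.rowLen i - 1) := by
  rw [← YoungDiagram.mem_cells]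
  show c ∈ Finset.erase _ _ ↔ _
  rw [Finset.mem_erase]
  simp [YoungDiagram.mem_cells, and_comm]

lemma corner_mem {μ : YoungDiagram} {i : ℕ} (h : RemValid μ i) : (i, μ.rowLen i - 1) ∈ μ := by
  rw [YoungDiagram.mem_iff_lt_rowLen]
  unfold RemValid at h; omega

lemma removeCell_covered {μ : YoungDiagram} {i : ℕ} (h : RemValid μ i) :
    Cov μ (removeCell μ i h) := by
  constructor
  · rw [← YoungDiagram.cells_subset_iff]
    exact Finset.erase_subset _ _
  · show μ.cells.card = (μ.cells.erase (i, μ.rowLen i - 1)).card + 1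
    rw [Finset.card_erase_of_mem (by rw [YoungDiagram.mem_cells]; exact corner_mem h)]
    have : 0 < μ.cells.card := Finset.card_pos.mpr ⟨_, (YoungDiagram.mem_cells _).mpr (corner_mem h)⟩
    omega



/-- A cover of `μ` is obtained by adding a valid cell. -/
lemma covers_eq_addCell {μ Λ : YoungDiagram} (hΛ : Cov Λ μ) :
    ∃ (i : ℕ) (h : AddValid μ i), addCell μ i h = Λ := by
  obtain ⟨hle, hcard⟩ := hΛ
  have hsub : μ.cells ⊆ Λ.cells := YoungDiagram.cells_subset_iff.mpr hle
  have hcc1 : Λ.card = Λ.cells.card := rfl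
  have hcc2 : μ.card = μ.cells.card := rfl
  have hdiff : (Λ.cells \ μ.cells).card = 1 := by
    rw [Finset.card_sdiff_of_subset hsub]; omega
  obtain ⟨c, hc⟩ := Finset.card_eq_one.mp hdiff
  have hcΛ : c ∈ Λ := by
    have : c ∈ Λ.cells \ μ.cells := hc ▸ Finset.mem_singleton_self c
    exact (YoungDiagram.mem_cells _).mp (Finset.mem_sdiff.mp this).1
  have hcμ : c ∉ μ := by
    have : c ∈ Λ.cells \ μ.cells := hc ▸ Finset.mem_singleton_self c
    intro hmem
    exact (Finset.mem_sdiff.mp this).2 ((YoungDiagram.mem_cells _).mpr hmem)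
  have hkey : ∀ x : ℕ × ℕ, x ∈ Λ → x ≠ c → x ∈ μ := by
    intro x hx hne
    by_contra hxx
    have : x ∈ Λ.cells \ μ.cells := Finset.mem_sdiff.mpr
      ⟨(YoungDiagram.mem_cells _).mpr hx, fun hh => hxx ((YoungDiagram.mem_cells _).mp hh)⟩
    rw [hc, Finset.mem_singleton] at this
    exact hne this
  obtain ⟨i, j⟩ := c
  have hj : j = μ.rowLen i := by
    have h1 : μ.rowLen i ≤ j := by
      by_contra hh
      exact hcμ (YoungDiagram.mem_iff_lt_rowLen.mpr (by omega))
    rcases Nat.eq_or_lt_of_le h1 with hh | hh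
    · omega
    · exfalso
      have hmem : (i, μ.rowLen i) ∈ Λ := Λ.up_left_mem le_rfl (le_of_lt hh) hcΛ
      have : (i, μ.rowLen i) ∈ μ := hkey _ hmem (by simp; omega)
      exact corner_not_mem this
  have hvalid : AddValid μ i := by
    rcases Nat.eq_zero_or_pos i with h0 | h0
    · exact Or.inl h0
    · right
      have hmem : (i - 1, j) ∈ Λ := Λ.up_left_mem (by omega) le_rfl hcΛ
      have : (i - 1, j) ∈ μ := hkey _ hmem (by simp; omega)
      have := YoungDiagram.mem_iff_lt_rowLen.mp this
      omega
  refine ⟨i, hvalid, ?_⟩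
  apply eq_of_le_of_card_le
  · rw [← YoungDiagram.cells_subset_iff]
    show insert (i, μ.rowLen i) μ.cells ⊆ Λ.cells
    rw [← hj, Finset.insert_subset_iff]
    exact ⟨(YoungDiagram.mem_cells _).mpr hcΛ, hsub⟩
  · show Λ.cells.card ≤ (insert (i, μ.rowLen i) μ.cells).card
    rw [← hj, Finset.card_insert_of_notMem (fun hh => hcμ ((YoungDiagram.mem_cells _).mp hh))]
    omega

/-- A diagram covered by `Λ` is obtained by removing a valid cell. -/
lemma covered_eq_removeCell {ν Λ : YoungDiagram} (hν : Cov Λ ν) :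
    ∃ (i : ℕ) (h : RemValid Λ i), removeCell Λ i h = ν := by
  obtain ⟨hle, hcard⟩ := hν
  have hsub : ν.cells ⊆ Λ.cells := YoungDiagram.cells_subset_iff.mpr hle
  have hcc1 : Λ.card = Λ.cells.card := rfl
  have hcc2 : ν.card = ν.cells.card := rfl
  have hdiff : (Λ.cells \ ν.cells).card = 1 := by
    rw [Finset.card_sdiff_of_subset hsub]; omega
  obtain ⟨c, hc⟩ := Finset.card_eq_one.mp hdiff
  have hcΛ : c ∈ Λ := by
    have : c ∈ Λ.cells \ ν.cells := hc ▸ Finset.mem_singleton_self c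
    exact (YoungDiagram.mem_cells _).mp (Finset.mem_sdiff.mp this).1
  have hcν : c ∉ ν := by
    have : c ∈ Λ.cells \ ν.cells := hc ▸ Finset.mem_singleton_self c
    intro hmem
    exact (Finset.mem_sdiff.mp this).2 ((YoungDiagram.mem_cells _).mpr hmem)
  have hkey : ∀ x : ℕ × ℕ, x ∈ Λ → x ≠ c → x ∈ ν := by
    intro x hx hne
    by_contra hxx
    have : x ∈ Λ.cells \ ν.cells := Finset.mem_sdiff.mpr
      ⟨(YoungDiagram.mem_cells _).mpr hx, fun hh => hxx ((YoungDiagram.mem_cells _).mp hh)⟩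
    rw [hc, Finset.mem_singleton] at this
    exact hne this
  obtain ⟨i, j⟩ := c
  have hjlt : j < Λ.rowLen i := YoungDiagram.mem_iff_lt_rowLen.mp hcΛ
  have hj : j + 1 = Λ.rowLen i := by
    rcases Nat.eq_or_lt_of_le (Nat.succ_le_of_lt hjlt) with hh | hh
    · exact hh
    · exfalso
      have hmem : (i, j + 1) ∈ Λ := YoungDiagram.mem_iff_lt_rowLen.mpr hh
      have h1 : (i, j + 1) ∈ ν := hkey _ hmem (by simp)
      have h2 : (i, j) ∈ ν := ν.up_left_mem le_rfl (by omega) h1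
      exact hcν h2
  have hvalid : RemValid Λ i := by
    unfold RemValid
    have : Λ.rowLen (i + 1) ≤ j := by
      by_contra hh
      have hmem : (i + 1, j) ∈ Λ := YoungDiagram.mem_iff_lt_rowLen.mpr (by omega)
      have h1 : (i + 1, j) ∈ ν := hkey _ hmem (by simp)
      have h2 : (i, j) ∈ ν := ν.up_left_mem (by omega) le_rfl h1
      exact hcν h2
    omega
  refine ⟨i, hvalid, ?_⟩
  symm
  apply eq_of_le_of_card_le
  · rw [← YoungDiagram.cells_subset_iff]
    show ν.cells ⊆ Λ.cells.erase (i, Λ.rowLen i - 1)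
    intro x hx
    rw [Finset.mem_erase]
    refine ⟨?_, hsub hx⟩
    intro hxx
    apply hcν
    have : (i, Λ.rowLen i - 1) = (i, j) := by simp; omega
    rw [hxx, this] at hx
    exact (YoungDiagram.mem_cells _).mp hx
  · show (Λ.cells.erase (i, Λ.rowLen i - 1)).card ≤ ν.cells.card
    rw [Finset.card_erase_of_mem (by rw [YoungDiagram.mem_cells]; exact corner_mem hvalid)]
    omega

open Classical in
/-- The finset of rows where a cell may be added. -/
noncomputable def rowA (μ : YoungDiagram) : Finset ℕ :=
  (Finset.range (μ.colLen 0 + 1)).filter (AddValid μ)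

open Classical in
/-- The finset of rows where a cell may be removed. -/
noncomputable def rowR (μ : YoungDiagram) : Finset ℕ :=
  (Finset.range (μ.colLen 0 + 1)).filter (RemValid μ)

lemma addValid_lt {μ : YoungDiagram} {i : ℕ} (h : AddValid μ i) : i < μ.colLen 0 + 1 := by
  rcases h with h0 | h
  · omega
  · have : 0 < μ.rowLen (i - 1) := by omega
    have hmem : (i - 1, 0) ∈ μ := YoungDiagram.mem_iff_lt_rowLen.mpr this
    have := YoungDiagram.mem_iff_lt_colLen.mp hmem
    omega

lemma remValid_lt {μ : YoungDiagram} {i : ℕ} (h : RemValid μ i) : i < μ.colLen 0 := by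
  have : 0 < μ.rowLen i := by unfold RemValid at h; omega
  have hmem : (i, 0) ∈ μ := YoungDiagram.mem_iff_lt_rowLen.mpr this
  exact YoungDiagram.mem_iff_lt_colLen.mp hmem

@[simp] lemma mem_rowA {μ : YoungDiagram} {i : ℕ} : i ∈ rowA μ ↔ AddValid μ i := by
  classical
  simp only [rowA, Finset.mem_filter, Finset.mem_range]
  exact ⟨fun h => h.2, fun h => ⟨addValid_lt h, h⟩⟩

@[simp] lemma mem_rowR {μ : YoungDiagram} {i : ℕ} : i ∈ rowR μ ↔ RemValid μ i := by
  classical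
  simp only [rowR, Finset.mem_filter, Finset.mem_range]
  exact ⟨fun h => h.2, fun h => ⟨by have := remValid_lt h; omega, h⟩⟩

lemma addCell_injective {μ : YoungDiagram} {i₁ i₂ : ℕ} {h₁ : AddValid μ i₁} {h₂ : AddValid μ i₂}
    (h : addCell μ i₁ h₁ = addCell μ i₂ h₂) : i₁ = i₂ := by
  have hmem : (i₁, μ.rowLen i₁) ∈ addCell μ i₂ h₂ := by
    rw [← h, mem_addCell]; left; rfl
  rw [mem_addCell] at hmem
  rcases hmem with hh | hh
  · exact congrArg Prod.fst hh
  · exact absurd hh corner_not_mem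

lemma removeCell_injective {μ : YoungDiagram} {i₁ i₂ : ℕ} {h₁ : RemValid μ i₁} {h₂ : RemValid μ i₂}
    (h : removeCell μ i₁ h₁ = removeCell μ i₂ h₂) : i₁ = i₂ := by
  by_contra hne
  have hmem : (i₁, μ.rowLen i₁ - 1) ∈ removeCell μ i₂ h₂ := by
    rw [mem_removeCell]
    refine ⟨corner_mem h₁, ?_⟩
    intro hh
    exact hne (congrArg Prod.fst hh)
  rw [← h, mem_removeCell] at hmem
  exact hmem.2 rfl

lemma coversF_card (μ : YoungDiagram) : (coversF μ).card = (rowA μ).card := by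
  symm
  refine Finset.card_bij (fun i hi => addCell μ i (mem_rowA.mp hi)) ?_ ?_ ?_
  · intro i hi
    rw [mem_coversF]
    exact addCell_covers _
  · intro i₁ h₁ i₂ h₂ h
    exact addCell_injective h
  · intro Λ hΛ
    obtain ⟨i, h, hi⟩ := covers_eq_addCell (mem_coversF.mp hΛ)
    exact ⟨i, mem_rowA.mpr h, hi⟩

lemma coveredF_card (Λ : YoungDiagram) : (coveredF Λ).card = (rowR Λ).card := by
  symm
  refine Finset.card_bij (fun i hi => removeCell Λ i (mem_rowR.mp hi)) ?_ ?_ ?_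
  · intro i hi
    rw [mem_coveredF]
    exact removeCell_covered _
  · intro i₁ h₁ i₂ h₂ h
    exact removeCell_injective h
  · intro ν hν
    obtain ⟨i, h, hi⟩ := covered_eq_removeCell (mem_coveredF.mp hν)
    exact ⟨i, mem_rowR.mpr h, hi⟩

lemma rowA_card (μ : YoungDiagram) : (rowA μ).card = (rowR μ).card + 1 := by
  have h0 : (0 : ℕ) ∈ rowA μ := mem_rowA.mpr (Or.inl rfl)
  have hpos : 0 < (rowA μ).card := Finset.card_pos.mpr ⟨0, h0⟩
  have herase : (rowA μ).card = ((rowA μ).erase 0).card + 1 := by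
    rw [Finset.card_erase_of_mem h0]
    omega
  rw [herase]
  congr 1
  symm
  refine Finset.card_bij (fun i _ => i + 1) ?_ ?_ ?_
  · intro i hi
    simp only [Finset.mem_erase]
    refine ⟨by omega, ?_⟩
    rw [mem_rowA]
    right
    simpa [RemValid] using mem_rowR.mp hi
  · intro i₁ _ i₂ _ h
    omega
  · intro j hj
    rw [Finset.mem_erase, mem_rowA] at hj
    obtain ⟨hj0, hj2⟩ := hj
    rcases hj2 with hh | hh
    · exact absurd hh hj0
    · refine ⟨j - 1, ?_, by omega⟩
      rw [mem_rowR]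
      unfold RemValid
      have : j - 1 + 1 = j := by omega
      rw [this]
      exact hh

lemma covers_card (μ : YoungDiagram) : (coversF μ).card = (coveredF μ).card + 1 := by
  rw [coversF_card, coveredF_card, rowA_card]

lemma coveredF_nonempty {μ : YoungDiagram} (h : μ ≠ ⊥) : (coveredF μ).Nonempty := by
  have hcard : 0 < μ.cells.card := by
    rcases Finset.eq_empty_or_nonempty μ.cells with he | hne
    · exfalso; apply h; ext c; simp [he, YoungDiagram.cells_bot]
    · exact Finset.card_pos.mpr hne
  obtain ⟨c, hcmem⟩ := Finset.card_pos.mp hcard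
  have h00 : (0, 0) ∈ μ := μ.up_left_mem (Nat.zero_le _) (Nat.zero_le _)
    ((YoungDiagram.mem_cells _).mp hcmem)
  have hcol : 0 < μ.colLen 0 := YoungDiagram.mem_iff_lt_colLen.mp h00
  set i := μ.colLen 0 - 1 with hi
  have hvalid : RemValid μ i := by
    unfold RemValid
    have h1 : 0 < μ.rowLen i := by
      rw [← YoungDiagram.mem_iff_lt_rowLen (j := 0)]
      rw [YoungDiagram.mem_iff_lt_colLen]
      omega
    have h2 : μ.rowLen (i + 1) = 0 := by
      by_contra hh
      have : (i + 1, 0) ∈ μ := YoungDiagram.mem_iff_lt_rowLen.mpr (by omega)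
      have := YoungDiagram.mem_iff_lt_colLen.mp this
      omega
    omega
  exact ⟨removeCell μ i hvalid, mem_coveredF.mpr (removeCell_covered hvalid)⟩

lemma dimSYT_pos (μ : YoungDiagram) : 0 < dimSYT μ := by
  suffices H : ∀ n (μ : YoungDiagram), μ.card = n → 0 < dimSYT μ from H μ.card μ rfl
  intro n
  induction n using Nat.strong_induction_on with
  | _ n ih =>
    intro μ hμ
    by_cases hbot : μ = ⊥
    · rw [hbot, dimSYT_bot]; omega
    · rw [dimSYT_rec hbot]
      refine Finset.sum_pos ?_ (coveredF_nonempty hbot)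
      intro ν hν
      obtain ⟨_, hc⟩ := mem_coveredF.mp hν
      exact ih ν.card (by omega) ν rfl

lemma card_le_of_le {μ ν : YoungDiagram} (h : μ ≤ ν) : μ.card ≤ ν.card :=
  Finset.card_le_card (YoungDiagram.cells_subset_iff.mpr h)

lemma common_card {l μ : YoungDiagram} (hne : μ ≠ l) (hc : μ.card = l.card) :
    (coversF l ∩ coversF μ).card = (coveredF l ∩ coveredF μ).card := by
  set n := l.card with hn
  have hsupinf : (l ⊔ μ).card + (l ⊓ μ).card = n + n := by
    show (l ⊔ μ).cells.card + (l ⊓ μ).cells.card = _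
    rw [YoungDiagram.cells_sup, YoungDiagram.cells_inf]
    rw [Finset.card_union_add_card_inter]
    show l.card + μ.card = n + n
    omega
  have hsup_gt : n < (l ⊔ μ).card := by
    refine card_lt_card_of_lt (lt_of_le_of_ne le_sup_left ?_)
    intro hh
    apply hne
    apply eq_of_le_of_card_le (hh ▸ le_sup_right)
    omega
  by_cases hs : (l ⊔ μ).card = n + 1
  · have hi : (l ⊓ μ).card + 1 = n := by omega
    have h1 : coversF l ∩ coversF μ = {l ⊔ μ} := by
      ext Λ
      simp only [Finset.mem_inter, mem_coversF, Finset.mem_singleton]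
      constructor
      · rintro ⟨⟨hl1, hl2⟩, ⟨hm1, hm2⟩⟩
        symm
        exact eq_of_le_of_card_le (sup_le hl1 hm1) (by omega)
      · rintro rfl
        exact ⟨⟨le_sup_left, by omega⟩, ⟨le_sup_right, by omega⟩⟩
    have h2 : coveredF l ∩ coveredF μ = {l ⊓ μ} := by
      ext ν
      simp only [Finset.mem_inter, mem_coveredF, Finset.mem_singleton]
      constructor
      · rintro ⟨⟨hl1, hl2⟩, ⟨hm1, hm2⟩⟩
        have hle : ν ≤ l ⊓ μ := le_inf hl1 hm1
        exact eq_of_le_of_card_le hle (by omega)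
      · rintro rfl
        exact ⟨⟨inf_le_left, by omega⟩, ⟨inf_le_right, by omega⟩⟩
    rw [h1, h2, Finset.card_singleton, Finset.card_singleton]
  · have h1 : coversF l ∩ coversF μ = ∅ := by
      rw [Finset.eq_empty_iff_forall_notMem]
      intro Λ hΛ
      simp only [Finset.mem_inter, mem_coversF] at hΛ
      obtain ⟨⟨hl1, hl2⟩, ⟨hm1, hm2⟩⟩ := hΛ
      have := card_le_of_le (sup_le hl1 hm1)
      omega
    have h2 : coveredF l ∩ coveredF μ = ∅ := by
      rw [Finset.eq_empty_iff_forall_notMem]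
      intro ν hν
      simp only [Finset.mem_inter, mem_coveredF] at hν
      obtain ⟨⟨hl1, hl2⟩, ⟨hm1, hm2⟩⟩ := hν
      have := card_le_of_le (le_inf hl1 hm1)
      omega
    rw [h1, h2]

lemma coveredF_bot : coveredF ⊥ = ∅ := by
  rw [Finset.eq_empty_iff_forall_notMem]
  intro ν hν
  have := (mem_coveredF.mp hν).2
  rw [card_bot] at this
  omega

lemma key : ∀ (l : YoungDiagram), ∑ L ∈ coversF l, dimSYT L = (l.card + 1) * dimSYT l := by
  suffices H : ∀ n (l : YoungDiagram), l.card = n →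
      ∑ L ∈ coversF l, dimSYT L = (n + 1) * dimSYT l by
    intro l; exact H l.card l rfl
  intro n
  induction n using Nat.strong_induction_on with
  | _ n ih =>
  intro l hl
  classical
  set allN : Finset YoungDiagram := (finite_card n).toFinset with hallN
  have mem_allN : ∀ x : YoungDiagram, x ∈ allN ↔ x.card = n := by
    intro x; simp [hallN, Set.Finite.mem_toFinset]
  have hcovsub : ∀ Λ ∈ coversF l, coveredF Λ ⊆ allN := by
    intro Λ hΛ ν hν
    have h1 := (mem_coversF.mp hΛ).2
    have h2 := (mem_coveredF.mp hν).2
    rw [mem_allN]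
    omega
  -- step 1-4
  have step4 : ∑ L ∈ coversF l, dimSYT L
      = ∑ ν ∈ allN, (coversF l ∩ coversF ν).card * dimSYT ν := by
    have e1 : ∑ L ∈ coversF l, dimSYT L
        = ∑ L ∈ coversF l, ∑ ν ∈ coveredF L, dimSYT ν := by
      refine Finset.sum_congr rfl ?_
      intro Λ hΛ
      refine dimSYT_rec ?_
      intro hbot
      have := (mem_coversF.mp hΛ).2
      rw [hbot, card_bot] at this
      omega
    rw [e1]
    have e2 : ∀ Λ ∈ coversF l, ∑ ν ∈ coveredF Λ, dimSYT ν
        = ∑ ν ∈ allN, if ν ∈ coveredF Λ then dimSYT ν else 0 := by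
      intro Λ hΛ
      rw [Finset.sum_ite_mem, Finset.inter_eq_right.mpr (hcovsub Λ hΛ)]
    rw [Finset.sum_congr rfl e2, Finset.sum_comm]
    refine Finset.sum_congr rfl ?_
    intro ν _
    have e3 : ∀ Λ, (if ν ∈ coveredF Λ then dimSYT ν else 0)
        = (if Λ ∈ coversF ν then dimSYT ν else 0) := by
      intro Λ
      congr 1
      simp only [mem_coveredF, mem_coversF]
    rw [Finset.sum_congr rfl (fun Λ _ => e3 Λ), Finset.sum_ite_mem, Finset.sum_const,
      smul_eq_mul]
  rw [step4]
  have hlN : l ∈ allN := (mem_allN l).mpr hl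
  rw [← Finset.add_sum_erase _ _ hlN, Finset.inter_self, covers_card]
  -- rewrite off-diagonal terms using common_card
  have step6 : ∑ ν ∈ allN.erase l, (coversF l ∩ coversF ν).card * dimSYT ν
      = ∑ ν ∈ allN.erase l, (coveredF l ∩ coveredF ν).card * dimSYT ν := by
    refine Finset.sum_congr rfl ?_
    intro ν hν
    rw [Finset.mem_erase] at hν
    rw [common_card hν.1 (by rw [(mem_allN ν).mp hν.2]; omega)]
  rw [step6]
  -- step 7: double counting over coveredF l
  have hcovsub2 : ∀ m ∈ coveredF l, coversF m ⊆ allN := by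
    intro m hm ν hν
    have h1 := (mem_coveredF.mp hm).2
    have h2 := (mem_coversF.mp hν).2
    rw [mem_allN]
    omega
  have step7 : ∑ ν ∈ allN.erase l, (coveredF l ∩ coveredF ν).card * dimSYT ν
      = ∑ m ∈ coveredF l, ∑ ν ∈ (coversF m).erase l, dimSYT ν := by
    have e1 : ∀ ν ∈ allN.erase l, (coveredF l ∩ coveredF ν).card * dimSYT ν
        = ∑ m ∈ coveredF l, if m ∈ coveredF ν then dimSYT ν else 0 := by
      intro ν _
      rw [Finset.sum_ite_mem, Finset.sum_const, smul_eq_mul]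
    rw [Finset.sum_congr rfl e1, Finset.sum_comm]
    refine Finset.sum_congr rfl ?_
    intro m hm
    have e2 : ∀ ν, (if m ∈ coveredF ν then dimSYT ν else 0)
        = (if ν ∈ coversF m then dimSYT ν else 0) := by
      intro ν
      congr 1
      simp only [mem_coveredF, mem_coversF]
    rw [Finset.sum_congr rfl (fun ν _ => e2 ν), Finset.sum_ite_mem]
    congr 1
    ext ν
    simp only [Finset.mem_inter, Finset.mem_erase]
    constructor
    · rintro ⟨⟨hν1, _⟩, hν2⟩
      exact ⟨hν1, hν2⟩
    · rintro ⟨hν1, hν2⟩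
      exact ⟨⟨hν1, (hcovsub2 m hm hν2)⟩, hν2⟩
  rw [step7]
  -- per-m identity
  have stepm : ∀ m ∈ coveredF l, dimSYT l + ∑ ν ∈ (coversF m).erase l, dimSYT ν
      = n * dimSYT m := by
    intro m hm
    obtain ⟨hmm1, hmm2⟩ := mem_coveredF.mp hm
    have hlm : l ∈ coversF m := mem_coversF.mpr ⟨hmm1, hmm2⟩
    rw [Finset.add_sum_erase _ _ hlm]
    rw [ih m.card (by omega) m rfl]
    congr 1
    omega
  -- sum over m
  by_cases hbot : l = ⊥
  · subst hbot
    rw [card_bot] at hl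
    subst hl
    rw [coveredF_bot]
    simp
  · have hsum : (coveredF l).card * dimSYT l
        + ∑ m ∈ coveredF l, ∑ ν ∈ (coversF m).erase l, dimSYT ν
        = n * dimSYT l := by
      calc (coveredF l).card * dimSYT l
          + ∑ m ∈ coveredF l, ∑ ν ∈ (coversF m).erase l, dimSYT ν
          = ∑ m ∈ coveredF l, (dimSYT l + ∑ ν ∈ (coversF m).erase l, dimSYT ν) := by
            rw [Finset.sum_add_distrib, Finset.sum_const, smul_eq_mul]
        _ = ∑ m ∈ coveredF l, n * dimSYT m := Finset.sum_congr rfl stepm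
        _ = n * ∑ m ∈ coveredF l, dimSYT m := by rw [Finset.mul_sum]
        _ = n * dimSYT l := by rw [← dimSYT_rec hbot]
    -- final arithmetic
    set d := (coveredF l).card
    set D := dimSYT l
    set A := ∑ m ∈ coveredF l, ∑ ν ∈ (coversF m).erase l, dimSYT ν
    calc (d + 1) * D + A = D + (d * D + A) := by ring
      _ = D + n * D := by rw [hsum]
      _ = (n + 1) * D := by ring


end SDC

end SDCAux

/-- For every Young diagram `λ` with `n` cells, `∑_Λ dim Λ = (n+1) · dim λ`, the sum being over
all Young diagrams `Λ` with `n+1` cells containing `λ`.  Consequently the Plancherel transition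
probabilities `p(λ,Λ) = dim Λ / ((n+1) · dim λ)` are nonnegative and sum to `1`. -/
theorem sum_dim_covers (lam : YoungDiagram) :
    (∑ᶠ Lam ∈ {Lam : YoungDiagram | lam ≤ Lam ∧ Lam.card = lam.card + 1}, dimSYT Lam) =
        (lam.card + 1) * dimSYT lam ∧
    (∀ Lam ∈ {Lam : YoungDiagram | lam ≤ Lam ∧ Lam.card = lam.card + 1},
      (0 : ℝ) ≤ (dimSYT Lam : ℝ) / (((lam.card : ℝ) + 1) * (dimSYT lam : ℝ))) ∧
    ∑ᶠ Lam ∈ {Lam : YoungDiagram | lam ≤ Lam ∧ Lam.card = lam.card + 1},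
        (dimSYT Lam : ℝ) / (((lam.card : ℝ) + 1) * (dimSYT lam : ℝ)) = 1 := by
  classical
  have hset : {Lam : YoungDiagram | lam ≤ Lam ∧ Lam.card = lam.card + 1}
      = ↑(SDC.coversF lam) := by
    ext Λ
    simp [SDC.mem_coversF, SDC.Cov]
  have hkey : ∑ L ∈ SDC.coversF lam, dimSYT L = (lam.card + 1) * dimSYT lam := SDC.key lam
  refine ⟨?_, ?_, ?_⟩
  · rw [hset, finsum_mem_coe_finset]
    exact hkey
  · intro Λ _
    positivity
  · rw [hset, finsum_mem_coe_finset]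
    have hdim : 0 < dimSYT lam := SDC.dimSYT_pos lam
    have hpos : (0 : ℝ) < ((lam.card : ℝ) + 1) * (dimSYT lam : ℝ) := by
      have h1 : (0 : ℝ) < (lam.card : ℝ) + 1 := by positivity
      have h2 : (0 : ℝ) < (dimSYT lam : ℝ) := by exact_mod_cast hdim
      exact mul_pos h1 h2
    rw [← Finset.sum_div, div_eq_one_iff_eq hpos.ne']
    push_cast
    exact_mod_cast congrArg (Nat.cast : ℕ → ℝ) hkey
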